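/- Let F be the free group on two generators (e.g. F = FreeGroup Bool, with generators a = of true and b = of false), and let f : F →* F be the unique group homomorphism with f(a) = a and f(b) = a. Then: (1) the center of F is trivial (Subgroup.center F = ⊥), so F is a centerless group and f is a morphism of the full subcategory of centerless groups; (2) the map ρ : F × F → F defined by ρ (u, v) = f u * f v is a group homomorphism, and it satisfies ρ (u, 1) = f u = ρ (1, u) for all u ∈ F, so f commutes with itself in the sense of Huq; (3) f is not disjoint from itself: f a = f a but f a ≠ 1. -/

import Mathlib

open FreeGroup

/-- The non-cancellation relation on letters. -/
private def NC (a b : Bool × Bool) : Prop := ¬(a.1 = b.1 ∧ a.2 = !b.2)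

private lemma reduce_eq_self_of_chain :
    ∀ L : List (Bool × Bool), List.Chain' NC L → FreeGroup.reduce L = L := by
  intro L
  induction L with
  | nil => intro _; rfl
  | cons x L ih =>
    intro h
    have hL : List.Chain' NC L := h.tail
    have hred := ih hL
    rw [FreeGroup.reduce.cons, hred]
    cases L with
    | nil => rfl
    | cons hd tl =>
      have hx : NC x hd := List.isChain_cons_cons.mp h |>.1
      simp only [NC] at hx
      simp [hx]

private lemma chain_of_reduce_eq_self :
    ∀ L : List (Bool × Bool), FreeGroup.reduce L = L → List.Chain' NC L := by
  intro L
  induction L with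
  | nil => intro _; exact List.isChain_nil
  | cons x L ih =>
    intro h
    rw [FreeGroup.reduce.cons] at h
    have hlen : (FreeGroup.reduce L).length ≤ L.length :=
      (FreeGroup.reduce.red (L := L)).length_le
    cases hr : FreeGroup.reduce L with
    | nil =>
      rw [hr] at h
      simp at h
      rw [← h.symm] at *
      exact List.isChain_singleton x
    | cons hd tl =>
      rw [hr] at h
      dsimp only at h
      by_cases hc : x.1 = hd.1 ∧ x.2 = !hd.2
      · rw [if_pos hc] at h
        exfalso
        have h1 : tl.length = (x :: L).length := by rw [h]
        have h2 : (hd :: tl).length ≤ L.length := hr ▸ hlen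
        simp at h1 h2
        omega
      · rw [if_neg hc] at h
        have hL : L = hd :: tl := by
          injection h with _ h2
          exact h2.symm
        have : FreeGroup.reduce L = L := by rw [hr, hL]
        have hch := ih this
        rw [hL]
        exact List.isChain_cons_cons.mpr ⟨hc, hL ▸ hch⟩

private lemma exists_letter : ∀ u v : Bool × Bool,
    ∃ x : Bool × Bool, x ≠ u ∧ x ≠ v := by decide

private lemma center_free_group_bot : Subgroup.center (FreeGroup Bool) = ⊥ := by
  rw [eq_bot_iff]
  intro z hz
  rw [Subgroup.mem_bot]
  by_contra hz1
  have hzc := Subgroup.mem_center_iff.mp hz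
  have hwne : z.toWord ≠ [] := by
    intro h
    exact hz1 (FreeGroup.toWord_eq_nil_iff.mp h)
  obtain ⟨hd, w', hw⟩ : ∃ hd w', z.toWord = hd :: w' := by
    cases hw' : z.toWord with
    | nil => exact absurd hw' hwne
    | cons a l => exact ⟨a, l, rfl⟩
  have hwred : FreeGroup.reduce (hd :: w') = hd :: w' := by
    rw [← hw]; exact FreeGroup.reduce_toWord z
  set t := (hd :: w').getLast (List.cons_ne_nil _ _) with ht
  obtain ⟨x, hx1, hx2⟩ := exists_letter (hd.1, !hd.2) t
  -- the conjugating element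
  set g : FreeGroup Bool := FreeGroup.mk [x] with hg
  have hconj : g * z * g⁻¹ = z := by
    rw [hzc g, mul_assoc, mul_inv_cancel, mul_one]
  have hzmk : z = FreeGroup.mk (hd :: w') := by
    conv_lhs => rw [← FreeGroup.mk_toWord (x := z)]
    rw [hw]
  have hginv : g⁻¹ = FreeGroup.mk [(x.1, !x.2)] := by
    rw [hg, FreeGroup.inv_mk]
    rfl
  have hprod : g * z * g⁻¹ = FreeGroup.mk (x :: (hd :: w') ++ [(x.1, !x.2)]) := by
    rw [hzmk, hginv, hg, FreeGroup.mul_mk, FreeGroup.mul_mk]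
    rfl
  -- the long word is reduced
  have hchain : List.Chain' NC (x :: (hd :: w') ++ [(x.1, !x.2)]) := by
    have hch : List.Chain' NC (hd :: w') := chain_of_reduce_eq_self _ hwred
    have h1 : NC x hd := by
      intro ⟨h1, h2⟩
      exact hx1 (Prod.ext h1 h2)
    have h2 : NC t (x.1, !x.2) := by
      rintro ⟨ha, hb⟩
      apply hx2
      apply Prod.ext
      · exact ha.symm
      · simpa using hb.symm
    refine List.isChain_append.mpr
      ⟨List.isChain_cons_cons.mpr ⟨h1, hch⟩, List.isChain_singleton _, ?_⟩
    intro a ha b hb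
    have ha' : a = t := by
        have : (x :: hd :: w').getLast? = some t := by
          rw [ht]
          rw [List.getLast?_cons_cons]
          exact (List.getLast?_eq_getLast (List.cons_ne_nil _ _)).symm ▸ rfl
        rw [this] at ha
        exact (Option.some_inj.mp ha).symm
    have hb' : b = (x.1, !x.2) := by simp at hb; exact hb.symm
    rw [ha', hb']
    exact h2
  have hredlong : FreeGroup.reduce (x :: (hd :: w') ++ [(x.1, !x.2)]) =
      x :: (hd :: w') ++ [(x.1, !x.2)] := reduce_eq_self_of_chain _ hchain
  have hwords : (g * z * g⁻¹).toWord = x :: (hd :: w') ++ [(x.1, !x.2)] := by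
    rw [hprod, FreeGroup.toWord_mk, hredlong]
  rw [hconj, hw] at hwords
  have := congrArg List.length hwords
  simp at this

private lemma f_mem_zpowers (f : FreeGroup Bool →* FreeGroup Bool)
    (hfa : f (FreeGroup.of true) = FreeGroup.of true)
    (hfb : f (FreeGroup.of false) = FreeGroup.of true)
    (u : FreeGroup Bool) : f u ∈ Subgroup.zpowers (FreeGroup.of true) := by
  induction u with
  | C1 => rw [_root_.map_one]; exact one_mem _
  | of x =>
    cases x
    · rw [hfb]
      exact Subgroup.mem_zpowers _
    · rw [hfa]
      exact Subgroup.mem_zpowers _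
  | inv_of x ih =>
    rw [_root_.map_inv]
    exact Subgroup.inv_mem _ ih
  | mul x y ihx ihy =>
    rw [_root_.map_mul]
    exact Subgroup.mul_mem _ ihx ihy

/-- Let `F` be the free group on two generators `a = of true` and `b = of false`, and
let `f : F →* F` be the unique homomorphism with `f a = a` and `f b = a`. Then:
(1) `F` is centerless; (2) `ρ (u, v) = f u * f v` is a group homomorphism on `F × F`
witnessing that `f` Huq-commutes with itself; (3) `f` is not disjoint from itself:
`f a = f a` but `f a ≠ 1`. -/
theorem centerless_groups_not_anticommutative
    (f : FreeGroup Bool →* FreeGroup Bool)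
    (hfa : f (FreeGroup.of true) = FreeGroup.of true)
    (hfb : f (FreeGroup.of false) = FreeGroup.of true) :
    Subgroup.center (FreeGroup Bool) = ⊥ ∧
    (∃ ρ : FreeGroup Bool × FreeGroup Bool →* FreeGroup Bool,
      (∀ u v : FreeGroup Bool, ρ (u, v) = f u * f v) ∧
      (∀ u : FreeGroup Bool, ρ (u, 1) = f u ∧ ρ (1, u) = f u)) ∧
    (f (FreeGroup.of true) = f (FreeGroup.of true) ∧ f (FreeGroup.of true) ≠ 1) := by
  have hcomm : ∀ u v : FreeGroup Bool, f u * f v = f v * f u := by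
    intro u v
    obtain ⟨m, hm⟩ := f_mem_zpowers f hfa hfb u
    obtain ⟨n, hn⟩ := f_mem_zpowers f hfa hfb v
    rw [← hm, ← hn]
    exact ((Commute.refl (FreeGroup.of true)).zpow_zpow m n)
  refine ⟨center_free_group_bot, ⟨⟨⟨fun p => f p.1 * f p.2, by simp⟩, ?_⟩, ?_, ?_⟩, rfl, ?_⟩
  · intro p q
    simp only [Prod.fst_mul, Prod.snd_mul, _root_.map_mul]
    calc f p.1 * f q.1 * (f p.2 * f q.2)
        = f p.1 * (f q.1 * f p.2) * f q.2 := by group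
      _ = f p.1 * (f p.2 * f q.1) * f q.2 := by rw [hcomm q.1 p.2]
      _ = f p.1 * f p.2 * (f q.1 * f q.2) := by group
  · intro u v; rfl
  · intro u
    constructor <;> simp [MonoidHom.coe_mk, OneHom.coe_mk]
  · rw [hfa]
    exact FreeGroup.of_ne_one true
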